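/- With w₁ = (e₁+e₂)/2, w₂ = (e₁+e₃)/2, w₃ = (e₂+e₃)/2, the regular tetrahedron T = conv{0, 2w₁, 2w₂, 2w₃} equals the union of the five polytopes T₁ = conv{0, w₁, w₂, w₃}, T₂ = conv{w₁, w₁+w₂, w₁+w₃, 2w₁}, T₃ = conv{w₂, w₁+w₂, w₂+w₃, 2w₂}, T₄ = conv{w₃, w₁+w₃, w₂+w₃, 2w₃}, and Oct = conv{w₁, w₂, w₃, w₁+w₂, w₁+w₃, w₂+w₃}. -/

import Mathlib

open Set

private lemma combo_mem {E : Type*} [AddCommGroup E] [Module ℝ E] {s : Set E}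
    (hs : Convex ℝ s) {n : ℕ} (w : Fin n → ℝ) (p : Fin n → E)
    (hw : ∀ i, 0 ≤ w i) (hsum : ∑ i, w i = 1) (hp : ∀ i, p i ∈ s) :
    ∑ i, w i • p i ∈ s :=
  hs.sum_mem (fun i _ => hw i) hsum (fun i _ => hp i)

private lemma decomp {E : Type*} [AddCommGroup E] [Module ℝ E] (w₁ w₂ w₃ : E) :
    convexHull ℝ {(0 : E), 2 • w₁, 2 • w₂, 2 • w₃} =
      convexHull ℝ {(0 : E), w₁, w₂, w₃} ∪ convexHull ℝ {w₁, w₁ + w₂, w₁ + w₃, 2 • w₁}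
      ∪ convexHull ℝ {w₂, w₁ + w₂, w₂ + w₃, 2 • w₂}
      ∪ convexHull ℝ {w₃, w₁ + w₃, w₂ + w₃, 2 • w₃}
      ∪ convexHull ℝ {w₁, w₂, w₃, w₁ + w₂, w₁ + w₃, w₂ + w₃} := by
  apply Subset.antisymm
  · -- hard direction
    intro x hx
    have hS : convexHull ℝ {(0 : E), 2 • w₁, 2 • w₂, 2 • w₃} ⊆
        {x : E | ∃ b c d : ℝ, 0 ≤ b ∧ 0 ≤ c ∧ 0 ≤ d ∧ b + c + d ≤ 1 ∧
          x = (2*b) • w₁ + (2*c) • w₂ + (2*d) • w₃} := by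
      apply convexHull_min
      · rintro y (rfl|rfl|rfl|rfl)
        · exact ⟨0,0,0, le_refl _, le_refl _, le_refl _, by norm_num, by module⟩
        · exact ⟨1,0,0, by norm_num, le_refl _, le_refl _, by norm_num, by module⟩
        · exact ⟨0,1,0, le_refl _, by norm_num, le_refl _, by norm_num, by module⟩
        · exact ⟨0,0,1, le_refl _, le_refl _, by norm_num, by norm_num, by module⟩
      · rintro x ⟨b,c,d,hb,hc,hd,hs1,rfl⟩ y ⟨b',c',d',hb',hc',hd',hs1',rfl⟩ s t hs0 ht0 hst
        refine ⟨s*b+t*b', s*c+t*c', s*d+t*d', by positivity, by positivity, by positivity,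
          by nlinarith, by module⟩
    obtain ⟨b, c, d, hb, hc, hd, hsum, rfl⟩ := hS hx
    clear hx hS
    rcases le_or_gt (b + c + d) (1/2) with h1 | h1
    · -- small tetrahedron at 0
      refine Or.inl <| Or.inl <| Or.inl <| Or.inl ?_
      have key := combo_mem (convex_convexHull ℝ {(0 : E), w₁, w₂, w₃})
        ![1-2*(b+c+d), 2*b, 2*c, 2*d] ![0, w₁, w₂, w₃]
        (by
          simp only [Fin.forall_fin_succ, Matrix.cons_val_zero, Matrix.cons_val_succ,
            IsEmpty.forall_iff, and_true]
          refine ⟨by linarith, by linarith, by linarith, by linarith⟩)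
        (by simp [Fin.sum_univ_succ]; ring)
        (by
          simp only [Fin.forall_fin_succ, Matrix.cons_val_zero, Matrix.cons_val_succ,
            IsEmpty.forall_iff, and_true]
          exact ⟨subset_convexHull ℝ _ (by simp), subset_convexHull ℝ _ (by simp),
            subset_convexHull ℝ _ (by simp), subset_convexHull ℝ _ (by simp)⟩)
      convert key using 1
      simp only [Fin.sum_univ_succ, Finset.univ_eq_empty, Finset.sum_empty,
        Matrix.cons_val_zero, Matrix.cons_val_succ]
      module
    rcases le_or_gt (1/2) b with h2 | h2
    · -- corner tetrahedron at 2w₁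
      refine Or.inl <| Or.inl <| Or.inl <| Or.inr ?_
      have key := combo_mem (convex_convexHull ℝ {w₁, w₁ + w₂, w₁ + w₃, 2 • w₁})
        ![2-2*(b+c+d), 2*c, 2*d, 2*b-1] ![w₁, w₁ + w₂, w₁ + w₃, 2 • w₁]
        (by
          simp only [Fin.forall_fin_succ, Matrix.cons_val_zero, Matrix.cons_val_succ,
            IsEmpty.forall_iff, and_true]
          refine ⟨by linarith, by linarith, by linarith, by linarith⟩)
        (by simp [Fin.sum_univ_succ]; ring)
        (by
          simp only [Fin.forall_fin_succ, Matrix.cons_val_zero, Matrix.cons_val_succ,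
            IsEmpty.forall_iff, and_true]
          exact ⟨subset_convexHull ℝ _ (by simp), subset_convexHull ℝ _ (by simp),
            subset_convexHull ℝ _ (by simp), subset_convexHull ℝ _ (by simp)⟩)
      convert key using 1
      simp only [Fin.sum_univ_succ, Finset.univ_eq_empty, Finset.sum_empty,
        Matrix.cons_val_zero, Matrix.cons_val_succ]
      module
    rcases le_or_gt (1/2) c with h3 | h3
    · -- corner tetrahedron at 2w₂
      refine Or.inl <| Or.inl <| Or.inr ?_
      have key := combo_mem (convex_convexHull ℝ {w₂, w₁ + w₂, w₂ + w₃, 2 • w₂})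
        ![2-2*(b+c+d), 2*b, 2*d, 2*c-1] ![w₂, w₁ + w₂, w₂ + w₃, 2 • w₂]
        (by
          simp only [Fin.forall_fin_succ, Matrix.cons_val_zero, Matrix.cons_val_succ,
            IsEmpty.forall_iff, and_true]
          refine ⟨by linarith, by linarith, by linarith, by linarith⟩)
        (by simp [Fin.sum_univ_succ]; ring)
        (by
          simp only [Fin.forall_fin_succ, Matrix.cons_val_zero, Matrix.cons_val_succ,
            IsEmpty.forall_iff, and_true]
          exact ⟨subset_convexHull ℝ _ (by simp), subset_convexHull ℝ _ (by simp),
            subset_convexHull ℝ _ (by simp), subset_convexHull ℝ _ (by simp)⟩)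
      convert key using 1
      simp only [Fin.sum_univ_succ, Finset.univ_eq_empty, Finset.sum_empty,
        Matrix.cons_val_zero, Matrix.cons_val_succ]
      module
    rcases le_or_gt (1/2) d with h4 | h4
    · -- corner tetrahedron at 2w₃
      refine Or.inl <| Or.inr ?_
      have key := combo_mem (convex_convexHull ℝ {w₃, w₁ + w₃, w₂ + w₃, 2 • w₃})
        ![2-2*(b+c+d), 2*b, 2*c, 2*d-1] ![w₃, w₁ + w₃, w₂ + w₃, 2 • w₃]
        (by
          simp only [Fin.forall_fin_succ, Matrix.cons_val_zero, Matrix.cons_val_succ,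
            IsEmpty.forall_iff, and_true]
          refine ⟨by linarith, by linarith, by linarith, by linarith⟩)
        (by simp [Fin.sum_univ_succ]; ring)
        (by
          simp only [Fin.forall_fin_succ, Matrix.cons_val_zero, Matrix.cons_val_succ,
            IsEmpty.forall_iff, and_true]
          exact ⟨subset_convexHull ℝ _ (by simp), subset_convexHull ℝ _ (by simp),
            subset_convexHull ℝ _ (by simp), subset_convexHull ℝ _ (by simp)⟩)
      convert key using 1
      simp only [Fin.sum_univ_succ, Finset.univ_eq_empty, Finset.sum_empty,
        Matrix.cons_val_zero, Matrix.cons_val_succ]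
      module
    · -- octahedron
      refine Or.inr ?_
      have hOct : Convex ℝ (convexHull ℝ {w₁, w₂, w₃, w₁ + w₂, w₁ + w₃, w₂ + w₃}) :=
        convex_convexHull ℝ _
      have hcenter : (1/2 : ℝ) • w₁ + (1/2 : ℝ) • (w₂ + w₃) ∈
          convexHull ℝ {w₁, w₂, w₃, w₁ + w₂, w₁ + w₃, w₂ + w₃} :=
        hOct (subset_convexHull ℝ _ (by simp)) (subset_convexHull ℝ _ (by simp))
          (by norm_num) (by norm_num) (by norm_num)
      have habs : |b + c - 1/2| + |b + d - 1/2| + |c + d - 1/2| ≤ 1/2 := by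
        rcases abs_cases (b + c - 1/2) with ⟨e1, _⟩ | ⟨e1, _⟩ <;>
        rcases abs_cases (b + d - 1/2) with ⟨e2, _⟩ | ⟨e2, _⟩ <;>
        rcases abs_cases (c + d - 1/2) with ⟨e3, _⟩ | ⟨e3, _⟩ <;>
        rw [e1, e2, e3] <;> linarith
      have key := combo_mem hOct
        ![1 - 2*(|b + c - 1/2| + |b + d - 1/2| + |c + d - 1/2|),
          |b + c - 1/2| + (b + c - 1/2), |b + c - 1/2| - (b + c - 1/2),
          |b + d - 1/2| + (b + d - 1/2), |b + d - 1/2| - (b + d - 1/2),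
          |c + d - 1/2| + (c + d - 1/2), |c + d - 1/2| - (c + d - 1/2)]
        ![(1/2 : ℝ) • w₁ + (1/2 : ℝ) • (w₂ + w₃), w₁ + w₂, w₃, w₁ + w₃, w₂, w₂ + w₃, w₁]
        (by
          simp only [Fin.forall_fin_succ, Matrix.cons_val_zero, Matrix.cons_val_succ,
            IsEmpty.forall_iff, and_true]
          refine ⟨by linarith,
            by linarith [neg_abs_le (b + c - 1/2)], by linarith [le_abs_self (b + c - 1/2)],
            by linarith [neg_abs_le (b + d - 1/2)], by linarith [le_abs_self (b + d - 1/2)],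
            by linarith [neg_abs_le (c + d - 1/2)], by linarith [le_abs_self (c + d - 1/2)]⟩)
        (by simp [Fin.sum_univ_succ]; ring)
        (by
          simp only [Fin.forall_fin_succ, Matrix.cons_val_zero, Matrix.cons_val_succ,
            IsEmpty.forall_iff, and_true]
          exact ⟨hcenter, subset_convexHull ℝ _ (by simp), subset_convexHull ℝ _ (by simp),
            subset_convexHull ℝ _ (by simp), subset_convexHull ℝ _ (by simp),
            subset_convexHull ℝ _ (by simp), subset_convexHull ℝ _ (by simp)⟩)
      convert key using 1
      simp only [Fin.sum_univ_succ, Finset.univ_eq_empty, Finset.sum_empty,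
        Matrix.cons_val_zero, Matrix.cons_val_succ]
      module
  · -- easy direction: each piece is inside T
    set T := convexHull ℝ {(0 : E), 2 • w₁, 2 • w₂, 2 • w₃} with hT
    have hTc : Convex ℝ T := convex_convexHull ℝ _
    have h0 : (0 : E) ∈ T := subset_convexHull ℝ _ (by simp)
    have ha1 : (2 : ℕ) • w₁ ∈ T := subset_convexHull ℝ _ (by simp)
    have ha2 : (2 : ℕ) • w₂ ∈ T := subset_convexHull ℝ _ (by simp)
    have ha3 : (2 : ℕ) • w₃ ∈ T := subset_convexHull ℝ _ (by simp)
    have mid : ∀ p q : E, p ∈ T → q ∈ T → (1/2 : ℝ) • p + (1/2 : ℝ) • q ∈ T := fun p q hp hq =>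
      hTc hp hq (by norm_num) (by norm_num) (by norm_num)
    have hw1 : w₁ ∈ T := by
      have := mid _ _ h0 ha1
      rwa [show (1/2:ℝ) • (0:E) + (1/2:ℝ) • ((2:ℕ) • w₁) = w₁ by module] at this
    have hw2 : w₂ ∈ T := by
      have := mid _ _ h0 ha2
      rwa [show (1/2:ℝ) • (0:E) + (1/2:ℝ) • ((2:ℕ) • w₂) = w₂ by module] at this
    have hw3 : w₃ ∈ T := by
      have := mid _ _ h0 ha3
      rwa [show (1/2:ℝ) • (0:E) + (1/2:ℝ) • ((2:ℕ) • w₃) = w₃ by module] at this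
    have hw12 : w₁ + w₂ ∈ T := by
      have := mid _ _ ha1 ha2
      rwa [show (1/2:ℝ) • ((2:ℕ) • w₁) + (1/2:ℝ) • ((2:ℕ) • w₂) = w₁ + w₂ by module] at this
    have hw13 : w₁ + w₃ ∈ T := by
      have := mid _ _ ha1 ha3
      rwa [show (1/2:ℝ) • ((2:ℕ) • w₁) + (1/2:ℝ) • ((2:ℕ) • w₃) = w₁ + w₃ by module] at this
    have hw23 : w₂ + w₃ ∈ T := by
      have := mid _ _ ha2 ha3
      rwa [show (1/2:ℝ) • ((2:ℕ) • w₂) + (1/2:ℝ) • ((2:ℕ) • w₃) = w₂ + w₃ by module] at this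
    refine union_subset (union_subset (union_subset (union_subset ?_ ?_) ?_) ?_) ?_ <;>
      refine convexHull_min ?_ hTc <;> rintro y (rfl|rfl|rfl|rfl|rfl|rfl) <;> assumption

/-- With `w₁ = (e₁+e₂)/2`, `w₂ = (e₁+e₃)/2`, `w₃ = (e₂+e₃)/2`, the regular
tetrahedron `conv {0, 2w₁, 2w₂, 2w₃}` is the union of the four small tetrahedra
`T₁, T₂, T₃, T₄` and the octahedron `Oct`. -/
theorem tetrahedron_decomposition :
    let w₁ : EuclideanSpace ℝ (Fin 3) := !₂[1/2, 1/2, 0]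
    let w₂ : EuclideanSpace ℝ (Fin 3) := !₂[1/2, 0, 1/2]
    let w₃ : EuclideanSpace ℝ (Fin 3) := !₂[0, 1/2, 1/2]
    let T := convexHull ℝ {(0 : EuclideanSpace ℝ (Fin 3)), 2 • w₁, 2 • w₂, 2 • w₃}
    let T₁ := convexHull ℝ {(0 : EuclideanSpace ℝ (Fin 3)), w₁, w₂, w₃}
    let T₂ := convexHull ℝ {w₁, w₁ + w₂, w₁ + w₃, 2 • w₁}
    let T₃ := convexHull ℝ {w₂, w₁ + w₂, w₂ + w₃, 2 • w₂}
    let T₄ := convexHull ℝ {w₃, w₁ + w₃, w₂ + w₃, 2 • w₃}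
    let Oct := convexHull ℝ {w₁, w₂, w₃, w₁ + w₂, w₁ + w₃, w₂ + w₃}
    T = T₁ ∪ T₂ ∪ T₃ ∪ T₄ ∪ Oct := by
  intro w₁ w₂ w₃ T T₁ T₂ T₃ T₄ Oct
  exact decomp w₁ w₂ w₃
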